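/- Suppose for a.e. x ∈ D̄, [P_t 1_{X₀}](x) → 0 as t → ∞, with the family uniformly dominated by an integrable function on each measurable A ⊆ D̄. Then for every measurable A ⊆ D̄, m({x ∈ X₀ : s_t(x) ∈ A}) → 0 as t → ∞; in particular, if A is a closed set not containing the target and trajectories are eventually monotone into the target neighborhood, the set of initial conditions in X₀ not converging to the target has Lebesgue measure zero. -/
import Mathlib


open MeasureTheory Set Filter
open scoped ENNReal

/-- Final step of Theorem 1: if `[P_t 1_{X₀}] → 0` pointwise a.e. on `D̄` with a uniform
integrable dominating function, then for every measurable `A ⊆ D̄` the occupancy measure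
`m({x ∈ X₀ : s_t(x) ∈ A})` tends to zero as `t → ∞` (via the identity
`∫_A [P_t 1_{X₀}] = m({x ∈ X₀ : s_t(x) ∈ A})` and dominated convergence). -/
theorem stmt19 {n : ℕ} (D : Set (EuclideanSpace ℝ (Fin n))) (hD : MeasurableSet D)
    (s : ℝ → EuclideanSpace ℝ (Fin n) → EuclideanSpace ℝ (Fin n))
    (hsm : ∀ τ : ℝ, Measurable (s τ))
    (X₀ : Set (EuclideanSpace ℝ (Fin n))) (hX₀ : MeasurableSet X₀) (hX₀D : X₀ ⊆ D)
    (Pind : ℝ → EuclideanSpace ℝ (Fin n) → ℝ≥0∞)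
    (hPmeas : ∀ t, Measurable (Pind t))
    (hPid : ∀ t : ℝ, ∀ A : Set (EuclideanSpace ℝ (Fin n)), MeasurableSet A → A ⊆ D →
      ∫⁻ x in A, Pind t x = volume {x ∈ X₀ | s t x ∈ A})
    (hdecay : ∀ᵐ x ∂(volume.restrict D),
      Tendsto (fun t => Pind t x) atTop (nhds 0))
    (g : EuclideanSpace ℝ (Fin n) → ℝ≥0∞) (hg : Measurable g)
    (hgint : ∫⁻ x in D, g x < ⊤)
    (hdom : ∀ t : ℝ, ∀ x ∈ D, Pind t x ≤ g x) :
    ∀ A : Set (EuclideanSpace ℝ (Fin n)), MeasurableSet A → A ⊆ D →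
      Tendsto (fun t => volume {x ∈ X₀ | s t x ∈ A}) atTop (nhds 0) := by
  intro A hA hAD
  have key : Tendsto (fun t => ∫⁻ x in A, Pind t x) atTop (nhds (∫⁻ x in A, (0 : ℝ≥0∞))) := by
    refine tendsto_lintegral_filter_of_dominated_convergence g
      (Eventually.of_forall fun t => hPmeas t) (Eventually.of_forall fun t => ?_) ?_ ?_
    · exact (ae_restrict_iff' hA).2 (Eventually.of_forall fun x hx => hdom t x (hAD hx))
    · exact ((lintegral_mono_set hAD).trans_lt hgint).ne
    · exact ae_restrict_of_ae_restrict_of_subset hAD hdecay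
  simpa [hPid _ A hA hAD] using key
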